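/- Let θ be a linear automorphism of a k-vector space V permuting a basis B of V, with all ⟨θ⟩-orbits of B finite. Then θ is diagonalizable (V is the direct sum of eigenspaces of θ) if and only if for every orbit length r occurring, k contains a primitive r-th root of unity. -/

import Mathlib

open Module Function Finset

section Aux

variable {k V ι : Type} [Field k] [AddCommGroup V] [Module k V]
  (b : Basis ι k V) (θ : V ≃ₗ[k] V) (e : Equiv.Perm ι)

/-- coordinate shift under θ -/
lemma aux_key (hperm : ∀ i, θ (b i) = b (e i)) (v : V) (j : ι) :
    b.repr (θ v) (e j) = b.repr v j := by
  have h : ((Finsupp.lapply (e j) : (ι →₀ k) →ₗ[k] k).comp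
        ((b.repr : V →ₗ[k] (ι →₀ k)).comp (θ : V →ₗ[k] V)))
      = (Finsupp.lapply j : (ι →₀ k) →ₗ[k] k).comp (b.repr : V →ₗ[k] (ι →₀ k)) := by
    apply b.ext
    intro m
    simp [hperm, Finsupp.single_apply_left e.injective]
  exact LinearMap.congr_fun h v

lemma aux_geom (hperm : ∀ i, θ (b i) = b (e i)) {v : V} {μ : k}
    (hv : θ v = μ • v) (n : ℕ) (j : ι) :
    b.repr v j = μ ^ n * b.repr v (e^[n] j) := by
  induction n with
  | zero => simp
  | succ n ih =>
    have h1 : b.repr v (e^[n] j) = μ * b.repr v (e (e^[n] j)) := by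
      have := aux_key b θ e hperm v (e^[n] j)
      rw [hv] at this
      simpa using this.symm
    rw [ih, h1, Function.iterate_succ_apply', pow_succ]
    ring

lemma aux_cancel (n : ℕ) (x : ι) : e^[n] ((⇑e⁻¹)^[n] x) = x := by
  rw [← Equiv.Perm.coe_pow, ← Equiv.Perm.coe_pow, ← Equiv.Perm.mul_apply, inv_pow,
    mul_inv_cancel]
  rfl

lemma aux_cancel' (n : ℕ) (x : ι) : (⇑e⁻¹)^[n] (e^[n] x) = x := by
  rw [← Equiv.Perm.coe_pow, ← Equiv.Perm.coe_pow, ← Equiv.Perm.mul_apply, inv_pow,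
    inv_mul_cancel]
  rfl

end Aux

/-- Let `θ` be a linear automorphism of a `k`-vector space `V` permuting a
basis `b` of `V` (via a permutation `e` of the index set), with all `⟨θ⟩`-orbits of the basis
finite.  Then `θ` is diagonalizable (`V` is the sum of the eigenspaces of `θ`) if and only if
for every orbit length `r` occurring, `k` contains a primitive `r`-th root of unity. -/
theorem stmt6 (k V ι : Type) [Field k] [AddCommGroup V] [Module k V]
    (b : Basis ι k V) (θ : V ≃ₗ[k] V) (e : Equiv.Perm ι)
    (hperm : ∀ i, θ (b i) = b (e i))
    (horb : ∀ i, 0 < Function.minimalPeriod e i) :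
    (⨆ μ : k, Module.End.eigenspace (θ : V →ₗ[k] V) μ) = ⊤ ↔
      ∀ i : ι, ∃ ζ : k, IsPrimitiveRoot ζ (Function.minimalPeriod e i) := by
  classical
  constructor
  · intro hsup i
    set r := Function.minimalPeriod e i with hrdef
    have hr : 0 < r := horb i
    haveI : NeZero r := ⟨hr.ne'⟩
    -- decompose b i into eigenvectors
    have hbmem : b i ∈ ⨆ μ : k, Module.End.eigenspace (θ : V →ₗ[k] V) μ := by
      rw [hsup]; trivial
    obtain ⟨f, hf, hsum⟩ := (Submodule.mem_iSup_iff_exists_finsupp _ _).mp hbmem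
    have eig : ∀ μ, θ (f μ) = μ • f μ := by
      intro μ
      exact Module.End.mem_eigenspace_iff.mp (hf μ)
    set c : k → k := fun μ => b.repr (f μ) i with hc
    have A : ∀ (μ : k) (n : ℕ), b.repr (f μ) ((⇑e⁻¹)^[n] i) = μ ^ n * c μ := by
      intro μ n
      have := aux_geom b θ e hperm (eig μ) n ((⇑e⁻¹)^[n] i)
      rwa [aux_cancel e n i] at this
    have S : ∀ n : ℕ, (∑ μ ∈ f.support, μ ^ n * c μ)
        = if (⇑e⁻¹)^[n] i = i then 1 else 0 := by
      intro n
      have h1 : b.repr (b i) ((⇑e⁻¹)^[n] i) = if (⇑e⁻¹)^[n] i = i then 1 else 0 := by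
        rw [b.repr_self, Finsupp.single_apply]
        simp [eq_comm]
      rw [← hsum] at h1
      rw [← h1]
      rw [Finsupp.sum, map_sum]
      rw [Finsupp.finset_sum_apply]
      exact Finset.sum_congr rfl fun μ _ => (A μ n).symm
    have hper : (⇑e⁻¹)^[r] i = i := by
      have h0 : e^[r] i = i := Function.iterate_minimalPeriod
      conv_lhs => rw [← h0]
      exact aux_cancel' e r i
    have hnper : ∀ n : ℕ, 0 < n → n < r → (⇑e⁻¹)^[n] i ≠ i := by
      intro n hn hnr hcon
      have h0 : e^[n] i = i := by
        conv_lhs => rw [← hcon]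
        exact aux_cancel e n i
      have : r ∣ n := Function.IsPeriodicPt.minimalPeriod_dvd h0
      exact absurd (Nat.le_of_dvd hn this) (by omega)
    have root : ∀ μ ∈ f.support, c μ ≠ 0 → μ ^ r = 1 := by
      intro μ _ hcμ
      have h1 := A μ r
      rw [hper] at h1
      have h2 : 1 * c μ = μ ^ r * c μ := by rw [one_mul]; exact h1
      exact (mul_right_cancel₀ hcμ h2).symm
    have one : (∑ μ ∈ f.support, c μ) = 1 := by
      have h1 := S 0
      rw [if_pos (by simp : ((⇑e⁻¹)^[0] i = i))] at h1
      simpa using h1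
    -- consider the group of r-th roots of unity
    obtain ⟨g, hg⟩ := IsCyclic.exists_generator (α := rootsOfUnity r k)
    set d := orderOf g with hd
    haveI := Fintype.ofFinite (rootsOfUnity r k)
    have hdcard : d = Fintype.card (rootsOfUnity r k) := by
      rw [hd, orderOf_eq_card_of_forall_mem_zpowers hg, Nat.card_eq_fintype_card]
    have horder : orderOf ((g : kˣ)) = d :=
      orderOf_injective (rootsOfUnity r k).subtype Subtype.coe_injective g
    have hdr : d ∣ r := by
      apply orderOf_dvd_of_pow_eq_one
      have h := (mem_rootsOfUnity r (g : kˣ)).mp g.2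
      ext
      exact_mod_cast h
    have hdpos : 0 < d := orderOf_pos g
    rcases eq_or_lt_of_le (Nat.le_of_dvd hr hdr) with hcase | hcase
    · -- d = r : generator is a primitive root
      refine ⟨((g : kˣ) : k), ?_⟩
      have h1 : IsPrimitiveRoot ((g : kˣ) : k) (orderOf (g : kˣ)) :=
        IsPrimitiveRoot.coe_units_iff.mpr (IsPrimitiveRoot.orderOf (g : kˣ))
      rwa [horder, hcase] at h1
    · -- d < r : contradiction
      exfalso
      have hzero : (∑ μ ∈ f.support, μ ^ d * c μ) = 0 := by
        rw [S d, if_neg (hnper d hdpos hcase)]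
      have hone : (∑ μ ∈ f.support, μ ^ d * c μ) = 1 := by
        rw [← one]
        apply Finset.sum_congr rfl
        intro μ hμ
        by_cases hcμ : c μ = 0
        · rw [hcμ, mul_zero]
        · have hμr : μ ^ r = 1 := root μ hμ hcμ
          have hμ0 : μ ≠ 0 := by
            intro h0
            rw [h0, zero_pow hr.ne'] at hμr
            exact zero_ne_one hμr
          have hu : (Units.mk0 μ hμ0) ∈ rootsOfUnity r k := by
            rw [mem_rootsOfUnity]
            ext
            push_cast
            exact hμr
          have : (⟨Units.mk0 μ hμ0, hu⟩ : rootsOfUnity r k) ^ d = 1 := by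
            rw [hdcard]
            exact pow_card_eq_one
          have h2 : (Units.mk0 μ hμ0) ^ d = 1 := by
            have h3 := congrArg (Subtype.val) this
            simpa using h3
          have hμd : μ ^ d = 1 := by
            have h4 := congrArg Units.val h2
            simpa using h4
          rw [hμd, one_mul]
      rw [hzero] at hone
      exact zero_ne_one hone
  · intro hroot
    rw [eq_top_iff, ← b.span_eq]
    rw [Submodule.span_le]
    rintro _ ⟨i, rfl⟩
    set r := Function.minimalPeriod e i with hrdef
    have hr : 0 < r := horb i
    obtain ⟨ζ, hζ⟩ := hroot i
    haveI : NeZero r := ⟨hr.ne'⟩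
    haveI hrk : NeZero ((r : ℕ) : k) := hζ.neZero'
    have hζ0 : ζ ≠ 0 := hζ.ne_zero hr.ne'
    set w : ℕ → V := fun m => ∑ j ∈ Finset.range r, ζ ^ (m * j) • b (e^[j] i) with hw
    have keyF : ∀ m : ℕ, ∀ j : ℕ, θ (ζ ^ (m * j) • b (e^[j] i))
        = ζ ^ (m * j) • b (e^[j+1] i) := by
      intro m j
      rw [map_smul, hperm, Function.iterate_succ_apply']
    have eig : ∀ m : ℕ, θ (w m) = (ζ ^ m)⁻¹ • w m := by
      intro m
      have hmul : ζ ^ m • θ (w m) = w m := by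
        rw [hw]
        simp only [map_sum, keyF]
        rw [Finset.smul_sum]
        have hFr : (fun j => ζ ^ (m * j) • b (e^[j] i)) r
            = (fun j => ζ ^ (m * j) • b (e^[j] i)) 0 := by
          simp only
          rw [Function.iterate_minimalPeriod, mul_comm m r, pow_mul, hζ.pow_eq_one, one_pow]
          simp
        set F : ℕ → V := fun j => ζ ^ (m * j) • b (e^[j] i) with hF
        have hshift : ∀ j, ζ ^ m • (ζ ^ (m * j) • b (e^[j+1] i)) = F (j + 1) := by
          intro j
          rw [hF]
          simp only
          rw [smul_smul, ← pow_add, mul_add, mul_one, add_comm m (m*j)]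
        calc (∑ j ∈ Finset.range r, ζ ^ m • (ζ ^ (m * j) • b (e^[j+1] i)))
            = ∑ j ∈ Finset.range r, F (j + 1) := Finset.sum_congr rfl fun j _ => hshift j
          _ = ∑ j ∈ Finset.range r, F j := by
              have h1 := Finset.sum_range_succ' F r
              have h2 := Finset.sum_range_succ F r
              rw [h2, hFr] at h1
              exact add_right_cancel h1.symm
      have hne : ζ ^ m ≠ 0 := pow_ne_zero m hζ0
      rw [eq_inv_smul_iff₀ hne]
      exact hmul
    have hwmem : ∀ m : ℕ, w m ∈ ⨆ μ : k, Module.End.eigenspace (θ : V →ₗ[k] V) μ := by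
      intro m
      apply Submodule.mem_iSup_of_mem ((ζ ^ m)⁻¹)
      exact Module.End.mem_eigenspace_iff.mpr (eig m)
    have hsumw : (∑ m ∈ Finset.range r, w m) = (r : k) • b i := by
      rw [hw]
      simp only
      rw [Finset.sum_comm]
      have hinner : ∀ j ∈ Finset.range r,
          (∑ m ∈ Finset.range r, ζ ^ (m * j) • b (e^[j] i))
          = (∑ m ∈ Finset.range r, (ζ ^ j) ^ m) • b (e^[j] i) := by
        intro j _
        rw [Finset.sum_smul]
        apply Finset.sum_congr rfl
        intro m _
        rw [← pow_mul, mul_comm j m]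
      rw [Finset.sum_congr rfl hinner]
      rw [Finset.sum_eq_single 0]
      · simp
      · intro j hj hj0
        have hjlt : j < r := Finset.mem_range.mp hj
        have hjpos : 0 < j := Nat.pos_of_ne_zero hj0
        have hne1 : ζ ^ j ≠ 1 := hζ.pow_ne_one_of_pos_of_lt hj0 hjlt
        have : (∑ m ∈ Finset.range r, (ζ ^ j) ^ m) = 0 := by
          rw [geom_sum_eq hne1, ← pow_mul, mul_comm j r, pow_mul, hζ.pow_eq_one, one_pow,
            sub_self, zero_div]
        rw [this, zero_smul]
      · intro h
        exact absurd (Finset.mem_range.mpr hr) h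
    have : b i = ((r : k))⁻¹ • ∑ m ∈ Finset.range r, w m := by
      rw [hsumw, smul_smul, inv_mul_cancel₀ hrk.out, one_smul]
    rw [this]
    exact Submodule.smul_mem _ _ (Submodule.sum_mem _ fun m _ => hwmem m)
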